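/- Let B = {b_1,...,b_n} ⊆ ℤ^m and c ∈ ℤ^n, and suppose P_c = {x ∈ ℝ^m : b_i·x ≤ c_i ∀i} is nonempty and equals the convex hull of its lattice points. Let z_1,...,z_r be the vertices of P_c. Then for every lattice point z ∈ P_{rc} = rP_c there exists an index j such that (rc - Bz) ≥ (c - Bz_j) coordinatewise, where Bz denotes the vector (b_1·z, ..., b_n·z). -/

import Mathlib

open RealInnerProductSpace

namespace Stmt17Aux

variable {m n r : ℕ}

/-- `x` lies in `conv {v k} + recession cone`. -/
def InDecomp (bv : Fin n → EuclideanSpace ℝ (Fin m)) (v : Fin r → EuclideanSpace ℝ (Fin m))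
    (x : EuclideanSpace ℝ (Fin m)) : Prop :=
  ∃ (l : Fin r → ℝ) (w : EuclideanSpace ℝ (Fin m)),
    (∀ k, 0 ≤ l k) ∧ (∑ k, l k) = 1 ∧ (∀ i, ⟪bv i, w⟫ ≤ 0) ∧ x = (∑ k, l k • v k) + w

lemma indecomp_vert (bv : Fin n → EuclideanSpace ℝ (Fin m)) (v : Fin r → EuclideanSpace ℝ (Fin m))
    (k : Fin r) : InDecomp bv v (v k) := by
  classical
  refine ⟨fun l => if l = k then 1 else 0, 0, ?_, ?_, ?_, ?_⟩
  · intro l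
    by_cases h : l = k <;> simp [h]
  · simp
  · simp
  · simp [ite_smul]

lemma indecomp_comb {bv : Fin n → EuclideanSpace ℝ (Fin m)} {v : Fin r → EuclideanSpace ℝ (Fin m)}
    {x1 x2 : EuclideanSpace ℝ (Fin m)} {a b : ℝ}
    (h1 : InDecomp bv v x1) (h2 : InDecomp bv v x2) (ha : 0 ≤ a) (hb : 0 ≤ b) (hab : a + b = 1) :
    InDecomp bv v (a • x1 + b • x2) := by
  obtain ⟨l1, w1, hl1, hs1, hw1, he1⟩ := h1
  obtain ⟨l2, w2, hl2, hs2, hw2, he2⟩ := h2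
  refine ⟨fun k => a * l1 k + b * l2 k, a • w1 + b • w2, ?_, ?_, ?_, ?_⟩
  · intro k
    have := hl1 k; have := hl2 k
    positivity
  · rw [Finset.sum_add_distrib, ← Finset.mul_sum, ← Finset.mul_sum, hs1, hs2]
    simpa using hab
  · intro i
    rw [inner_add_right, real_inner_smul_right, real_inner_smul_right]
    have h1 := hw1 i; have h2 := hw2 i
    nlinarith
  · subst he1; subst he2
    have hrw : ∀ (l : Fin r → ℝ) (aa : ℝ), (∑ k, (aa * l k) • v k) = aa • ∑ k, l k • v k := by
      intro l aa
      rw [Finset.smul_sum]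
      exact Finset.sum_congr rfl fun k _ => (smul_smul aa (l k) (v k)).symm
    simp only [add_smul, Finset.sum_add_distrib, hrw]
    rw [smul_add, smul_add]
    abel

lemma indecomp_rec {bv : Fin n → EuclideanSpace ℝ (Fin m)} {v : Fin r → EuclideanSpace ℝ (Fin m)}
    {y u : EuclideanSpace ℝ (Fin m)}
    (h : InDecomp bv v y) (hu : ∀ i, ⟪bv i, u⟫ ≤ 0) : InDecomp bv v (y + u) := by
  obtain ⟨l, w, hl, hs, hw, he⟩ := h
  refine ⟨l, w + u, hl, hs, fun i => ?_, by rw [he]; abel⟩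
  rw [inner_add_right]
  have := hw i; have := hu i; linarith

lemma move (bv : Fin n → EuclideanSpace ℝ (Fin m)) (c : Fin n → ℝ)
    (x e : EuclideanSpace ℝ (Fin m)) (hx : ∀ i, ⟪bv i, x⟫ ≤ c i)
    (hSe : ∀ u ∈ Submodule.span ℝ (bv '' {i | ⟪bv i, x⟫ = c i}), ⟪u, e⟫ = 0)
    (hpos : ∃ i, 0 < ⟪bv i, e⟫) :
    ∃ t : ℝ, 0 < t ∧ (∀ i, ⟪bv i, x + t • e⟫ ≤ c i) ∧
      Submodule.span ℝ (bv '' {i | ⟪bv i, x⟫ = c i}) <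
      Submodule.span ℝ (bv '' {i | ⟪bv i, x + t • e⟫ = c i}) := by
  classical
  have he : ∀ i, ⟪bv i, x⟫ = c i → ⟪bv i, e⟫ = 0 := fun i hi =>
    hSe _ (Submodule.subset_span ⟨i, hi, rfl⟩)
  obtain ⟨i0, hi0⟩ := hpos
  set Ipos := Finset.univ.filter (fun i => 0 < ⟪bv i, e⟫) with hIposdef
  have hne : Ipos.Nonempty := ⟨i0, Finset.mem_filter.2 ⟨Finset.mem_univ _, hi0⟩⟩
  set f : Fin n → ℝ := fun i => (c i - ⟪bv i, x⟫) / ⟪bv i, e⟫ with hfdef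
  set t := Ipos.inf' hne f with htdef
  have hfpos : ∀ i ∈ Ipos, 0 < f i := by
    intro i hi
    have hei : 0 < ⟪bv i, e⟫ := (Finset.mem_filter.1 hi).2
    have hne' : ⟪bv i, x⟫ ≠ c i := fun h => by rw [he i h] at hei; exact lt_irrefl _ hei
    exact div_pos (sub_pos.2 (lt_of_le_of_ne (hx i) hne')) hei
  have htpos : 0 < t := (Finset.lt_inf'_iff hne).2 hfpos
  have hmem : ∀ i, ⟪bv i, x + t • e⟫ ≤ c i := by
    intro i
    rw [inner_add_right, real_inner_smul_right]
    by_cases hi : 0 < ⟪bv i, e⟫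
    · have hti : t ≤ f i := Finset.inf'_le f (Finset.mem_filter.2 ⟨Finset.mem_univ _, hi⟩)
      have h2 : t * ⟪bv i, e⟫ ≤ f i * ⟪bv i, e⟫ :=
        mul_le_mul_of_nonneg_right hti (le_of_lt hi)
      have heq : f i * ⟪bv i, e⟫ = c i - ⟪bv i, x⟫ := by
        rw [hfdef]; exact div_mul_cancel₀ _ (ne_of_gt hi)
      linarith
    · push_neg at hi
      have h2 : t * ⟪bv i, e⟫ ≤ 0 := mul_nonpos_of_nonneg_of_nonpos htpos.le hi
      have := hx i; linarith
  obtain ⟨istar, histar, hstar⟩ := Finset.exists_mem_eq_inf' hne f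
  have heistar : 0 < ⟪bv istar, e⟫ := (Finset.mem_filter.1 histar).2
  have hsub : {i | ⟪bv i, x⟫ = c i} ⊆ {i | ⟪bv i, x + t • e⟫ = c i} := by
    intro i hi
    simp only [Set.mem_setOf_eq] at hi ⊢
    rw [inner_add_right, real_inner_smul_right, he i hi, mul_zero, add_zero]
    exact hi
  have hstar_new : istar ∈ {i | ⟪bv i, x + t • e⟫ = c i} := by
    simp only [Set.mem_setOf_eq]
    rw [inner_add_right, real_inner_smul_right, htdef, hstar, hfdef]
    have : (c istar - ⟪bv istar, x⟫) / ⟪bv istar, e⟫ * ⟪bv istar, e⟫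
        = c istar - ⟪bv istar, x⟫ := div_mul_cancel₀ _ (ne_of_gt heistar)
    rw [this]; ring
  refine ⟨t, htpos, hmem, lt_of_le_of_ne (Submodule.span_mono (Set.image_mono hsub)) ?_⟩
  intro hEq
  have h1 : bv istar ∈ Submodule.span ℝ (bv '' {i | ⟪bv i, x + t • e⟫ = c i}) :=
    Submodule.subset_span ⟨istar, hstar_new, rfl⟩
  rw [← hEq] at h1
  have := hSe _ h1
  rw [this] at heistar
  exact lt_irrefl _ heistar

theorem decomp (bv : Fin n → EuclideanSpace ℝ (Fin m)) (c : Fin n → ℝ)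
    (v : Fin r → EuclideanSpace ℝ (Fin m))
    (hnd : ∀ d : EuclideanSpace ℝ (Fin m), (∀ i, ⟪bv i, d⟫ = 0) → d = 0)
    (hexp : ∀ x : EuclideanSpace ℝ (Fin m), (∀ i, ⟪bv i, x⟫ ≤ c i) →
      (∃ w : EuclideanSpace ℝ (Fin m), ∀ y, (∀ i, ⟪bv i, y⟫ ≤ c i) → y ≠ x →
        ⟪w, y⟫ < ⟪w, x⟫) →
      ∃ k, x = v k) :
    ∀ x, (∀ i, ⟪bv i, x⟫ ≤ c i) → InDecomp bv v x := by
  classical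
  have base : ∀ x, (∀ i, ⟪bv i, x⟫ ≤ c i) →
      Submodule.span ℝ (bv '' {i | ⟪bv i, x⟫ = c i}) = ⊤ → InDecomp bv v x := by
    intro x hx hS
    have huniq : ∀ y : EuclideanSpace ℝ (Fin m),
        (∀ i, ⟪bv i, x⟫ = c i → ⟪bv i, y⟫ = c i) → y = x := by
      intro y hy
      have hsub : bv '' {i | ⟪bv i, x⟫ = c i} ⊆
          ↑(LinearMap.ker ((innerSL ℝ (y - x) : EuclideanSpace ℝ (Fin m) →L[ℝ] ℝ).toLinearMap)) := by
        rintro u ⟨i, hi, rfl⟩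
        simp only [SetLike.mem_coe, LinearMap.mem_ker, ContinuousLinearMap.coe_coe, innerSL_apply_apply]
        rw [real_inner_comm, inner_sub_right, hy i hi, hi, sub_self]
      have hle := Submodule.span_le.2 hsub
      rw [hS] at hle
      have hmem : y - x ∈ LinearMap.ker
          ((innerSL ℝ (y - x) : EuclideanSpace ℝ (Fin m) →L[ℝ] ℝ).toLinearMap) :=
        hle Submodule.mem_top
      simp only [LinearMap.mem_ker, ContinuousLinearMap.coe_coe, innerSL_apply_apply] at hmem
      rw [inner_self_eq_zero, sub_eq_zero] at hmem
      exact hmem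
    set T := Finset.univ.filter (fun i => ⟪bv i, x⟫ = c i) with hTdef
    have hsupp : ∀ y, (∀ i, ⟪bv i, y⟫ ≤ c i) → y ≠ x →
        ⟪∑ i ∈ T, bv i, y⟫ < ⟪∑ i ∈ T, bv i, x⟫ := by
      intro y hy hyx
      rw [sum_inner, sum_inner]
      apply Finset.sum_lt_sum
      · intro i hi
        have : ⟪bv i, x⟫ = c i := by simpa [hTdef] using hi
        rw [this]; exact hy i
      · by_contra hcon
        push_neg at hcon
        apply hyx
        apply huniq
        intro i hi
        have hiT : i ∈ T := Finset.mem_filter.2 ⟨Finset.mem_univ _, hi⟩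
        have h1 := hcon i hiT
        have h2 := hy i
        rw [hi] at h1
        exact le_antisymm (hy i) h1
    obtain ⟨k, hk⟩ := hexp x hx ⟨∑ i ∈ T, bv i, hsupp⟩
    rw [hk]
    exact indecomp_vert bv v k
  suffices H : ∀ s : ℕ, ∀ x, (∀ i, ⟪bv i, x⟫ ≤ c i) →
      m ≤ s + Module.finrank ℝ (Submodule.span ℝ (bv '' {i | ⟪bv i, x⟫ = c i})) →
      InDecomp bv v x by
    intro x hx
    exact H m x hx (Nat.le_add_right m _)
  intro s
  induction s with
  | zero =>
    intro x hx hrank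
    apply base x hx
    apply Submodule.eq_top_of_finrank_eq
    have h1 := Submodule.finrank_le (Submodule.span ℝ (bv '' {i | ⟪bv i, x⟫ = c i}))
    rw [finrank_euclideanSpace_fin] at h1
    rw [finrank_euclideanSpace_fin]
    omega
  | succ s ih =>
    intro x hx hrank
    by_cases hS : Submodule.span ℝ (bv '' {i | ⟪bv i, x⟫ = c i}) = ⊤
    · exact base x hx hS
    · have hbot : (Submodule.span ℝ (bv '' {i | ⟪bv i, x⟫ = c i}))ᗮ ≠ ⊥ := by
        intro h
        exact hS (Submodule.orthogonal_eq_bot_iff.1 h)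
      obtain ⟨d, hdS, hd0⟩ := (Submodule.ne_bot_iff _).1 hbot
      have hSe : ∀ u ∈ Submodule.span ℝ (bv '' {i | ⟪bv i, x⟫ = c i}), ⟪u, d⟫ = 0 :=
        (Submodule.mem_orthogonal _ d).1 hdS
      have hSe' : ∀ u ∈ Submodule.span ℝ (bv '' {i | ⟪bv i, x⟫ = c i}), ⟪u, -d⟫ = 0 :=
        fun u hu => by rw [inner_neg_right, hSe u hu, neg_zero]
      have key : ∀ e : EuclideanSpace ℝ (Fin m),
          (∀ u ∈ Submodule.span ℝ (bv '' {i | ⟪bv i, x⟫ = c i}), ⟪u, e⟫ = 0) →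
          (∃ i, 0 < ⟪bv i, e⟫) →
          ∃ t : ℝ, 0 < t ∧ (∀ i, ⟪bv i, x + t • e⟫ ≤ c i) ∧ InDecomp bv v (x + t • e) := by
        intro e hOrth hpose
        obtain ⟨t, htpos, hmem, hlt⟩ := move bv c x e hx hOrth hpose
        refine ⟨t, htpos, hmem, ih _ hmem ?_⟩
        have hfr := Submodule.finrank_lt_finrank_of_lt hlt
        omega
      by_cases hp : ∃ i, 0 < ⟪bv i, d⟫
      · by_cases hm : ∃ i, 0 < ⟪bv i, -d⟫
        · obtain ⟨t1, ht1, hm1, hC1⟩ := key d hSe hp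
          obtain ⟨t2, ht2, hm2, hC2⟩ := key (-d) hSe' hm
          have hsum : (0:ℝ) < t1 + t2 := by linarith
          have hxeq : x = (t2 / (t1 + t2)) • (x + t1 • d) + (t1 / (t1 + t2)) • (x + t2 • (-d)) := by
            match_scalars <;> field_simp <;> ring
          rw [hxeq]
          exact indecomp_comb hC1 hC2 (by positivity) (by positivity)
            (by field_simp; ring)
        · push_neg at hm
          have hmd : ∀ i, ⟪bv i, -d⟫ ≤ 0 := hm
          obtain ⟨t1, ht1, hm1, hC1⟩ := key d hSe hp
          have hxeq : x = (x + t1 • d) + t1 • (-d) := by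
            rw [smul_neg]; abel
          rw [hxeq]
          exact indecomp_rec hC1 (fun i => by
            rw [real_inner_smul_right]
            exact mul_nonpos_of_nonneg_of_nonpos ht1.le (hmd i))
      · push_neg at hp
        have hm : ∃ i, 0 < ⟪bv i, -d⟫ := by
          by_contra hmc
          push_neg at hmc
          refine hd0 (hnd d fun i => ?_)
          have h1 := hp i
          have h2 := hmc i
          rw [inner_neg_right] at h2
          linarith
        obtain ⟨t2, ht2, hm2, hC2⟩ := key (-d) hSe' hm
        have hxeq : x = (x + t2 • (-d)) + t2 • d := by
          rw [smul_neg]; abel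
        rw [hxeq]
        exact indecomp_rec hC2 (fun i => by
          rw [real_inner_smul_right]
          exact mul_nonpos_of_nonneg_of_nonpos ht2.le (hp i))

end Stmt17Aux

namespace Stmt17Aux

variable {m n r : ℕ}

def bvR (b : Fin n → Fin m → ℤ) : Fin n → EuclideanSpace ℝ (Fin m) := fun i => WithLp.toLp 2 (fun j => (b i j : ℝ))

def vvR (v : Fin r → Fin m → ℤ) : Fin r → EuclideanSpace ℝ (Fin m) := fun k => WithLp.toLp 2 (fun j => (v k j : ℝ))

lemma hipb (b : Fin n → Fin m → ℤ) (i : Fin n) (y : EuclideanSpace ℝ (Fin m)) :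
    ⟪bvR b i, y⟫ = ∑ j, (b i j : ℝ) * y j := by
  simp [PiLp.inner_apply, RCLike.inner_apply, bvR, mul_comm]

end Stmt17Aux

/-- Suppose `P_c = {x ∈ ℝ^m : b_i·x ≤ c_i}` is nonempty and equals the convex hull of its
lattice points, and let `v_1,…,v_r` enumerate the vertices of `P_c` (all of which are
lattice points).  Then every lattice point `z` of `P_{rc}` satisfies
`rc - Bz ≥ c - Bv_k` coordinatewise for some `k`. -/
theorem stmt17 (m n r : ℕ) (hr : 0 < r) (b : Fin n → Fin m → ℤ) (c : Fin n → ℤ)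
    (hne : ∃ x : Fin m → ℝ, ∀ i, ∑ j, (b i j : ℝ) * x j ≤ (c i : ℝ))
    (hconv : {x : Fin m → ℝ | ∀ i, ∑ j, (b i j : ℝ) * x j ≤ (c i : ℝ)} =
      convexHull ℝ {x : Fin m → ℝ | (∃ z : Fin m → ℤ, x = fun j => (z j : ℝ)) ∧
        ∀ i, ∑ j, (b i j : ℝ) * x j ≤ (c i : ℝ)})
    (v : Fin r → Fin m → ℤ)
    (hvert : ∀ x : Fin m → ℝ,
      ((∀ i, ∑ j, (b i j : ℝ) * x j ≤ (c i : ℝ)) ∧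
        ∃ w : Fin m → ℝ, ∀ y : Fin m → ℝ,
          (∀ i, ∑ j, (b i j : ℝ) * y j ≤ (c i : ℝ)) → y ≠ x →
            ∑ j, w j * y j < ∑ j, w j * x j) ↔
      ∃ k : Fin r, x = fun j => (v k j : ℝ)) :
    ∀ z : Fin m → ℤ, (∀ i, ∑ j, b i j * z j ≤ (r : ℤ) * c i) →
      ∃ k : Fin r, ∀ i,
        c i - ∑ j, b i j * v k j ≤ (r : ℤ) * c i - ∑ j, b i j * z j := by
  intro z hz
  classical
  have hr0 : (0:ℝ) < (r:ℝ) := by exact_mod_cast hr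
  obtain ⟨hv0mem, w0, hw0⟩ := (hvert (fun j => (v ⟨0, hr⟩ j : ℝ))).2 ⟨⟨0, hr⟩, rfl⟩
  -- nondegeneracy
  have hnd : ∀ d : EuclideanSpace ℝ (Fin m), (∀ i, ⟪Stmt17Aux.bvR b i, d⟫ = 0) → d = 0 := by
    intro d hd
    by_contra hd0
    have hfd : ∀ i, ∑ j, (b i j : ℝ) * d j = 0 := fun i => by
      rw [← Stmt17Aux.hipb b i d]; exact hd i
    have hsplit : ∀ (s : ℝ) (i : Fin n),
        ∑ j, (b i j : ℝ) * ((v ⟨0, hr⟩ j : ℝ) + s * d j)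
          = ∑ j, (b i j : ℝ) * (v ⟨0, hr⟩ j : ℝ) + s * ∑ j, (b i j : ℝ) * d j := by
      intro s i
      rw [Finset.mul_sum, ← Finset.sum_add_distrib]
      exact Finset.sum_congr rfl fun j _ => by ring
    have hfeas : ∀ s : ℝ, ∀ i, ∑ j, (b i j : ℝ) * ((v ⟨0, hr⟩ j : ℝ) + s * d j) ≤ (c i : ℝ) := by
      intro s i
      rw [hsplit s i, hfd i, mul_zero, add_zero]
      exact hv0mem i
    have hnoteq : ∀ s : ℝ, s ≠ 0 →
        (fun j => (v ⟨0, hr⟩ j : ℝ) + s * d j) ≠ (fun j => (v ⟨0, hr⟩ j : ℝ)) := by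
      intro s hs hEq
      apply hd0
      rw [WithLp.ext_iff]
      funext j
      show d.ofLp j = 0
      have := congrFun hEq j
      have hdj : s * d j = 0 := by linarith
      have := mul_eq_zero.1 hdj
      tauto
    have h1 := hw0 _ (hfeas 1) (hnoteq 1 one_ne_zero)
    have h2 := hw0 _ (hfeas (-1)) (hnoteq (-1) (by norm_num))
    have e1 : ∀ s : ℝ, ∑ j, w0 j * ((v ⟨0, hr⟩ j : ℝ) + s * d j)
        = ∑ j, w0 j * (v ⟨0, hr⟩ j : ℝ) + s * ∑ j, w0 j * d j := by
      intro s
      rw [Finset.mul_sum, ← Finset.sum_add_distrib]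
      exact Finset.sum_congr rfl fun j _ => by ring
    rw [e1 1] at h1
    rw [e1 (-1)] at h2
    linarith
  -- exposed points are vertices
  have hexp : ∀ x : EuclideanSpace ℝ (Fin m), (∀ i, ⟪Stmt17Aux.bvR b i, x⟫ ≤ (c i : ℝ)) →
      (∃ w : EuclideanSpace ℝ (Fin m), ∀ y, (∀ i, ⟪Stmt17Aux.bvR b i, y⟫ ≤ (c i : ℝ)) → y ≠ x →
        ⟪w, y⟫ < ⟪w, x⟫) →
      ∃ k, x = Stmt17Aux.vvR v k := by
    rintro x hPx ⟨w, hw⟩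
    have hx' : ∀ i, ∑ j, (b i j : ℝ) * x j ≤ (c i : ℝ) := fun i => by
      rw [← Stmt17Aux.hipb b i x]; exact hPx i
    have hW : ∀ y : Fin m → ℝ, (∀ i, ∑ j, (b i j : ℝ) * y j ≤ (c i : ℝ)) → y ≠ x →
        ∑ j, w j * y j < ∑ j, w j * x j := by
      intro y hy hyx
      have h2 := hw (WithLp.toLp 2 y) (fun i => by rw [Stmt17Aux.hipb b i _]; exact hy i)
        (fun h => hyx (by rw [← h]))
      have ew : ∀ u : EuclideanSpace ℝ (Fin m), ⟪w, u⟫ = ∑ j, w j * u j := fun u => by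
        simp [PiLp.inner_apply, RCLike.inner_apply, mul_comm]
      rw [ew (WithLp.toLp 2 y), ew x] at h2
      exact h2
    obtain ⟨k, hk⟩ := (hvert x.ofLp).1 ⟨hx', w.ofLp, hW⟩
    exact ⟨k, by rw [WithLp.ext_iff, hk]; rfl⟩
  -- the scaled point
  have hx0 : ∀ i, ⟪Stmt17Aux.bvR b i, (WithLp.toLp 2 (fun j => (z j : ℝ) / r) : EuclideanSpace ℝ (Fin m))⟫
      ≤ (c i : ℝ) := by
    intro i
    simp only [Stmt17Aux.hipb, WithLp.ofLp_toLp]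
    have hsum : ∑ j, (b i j : ℝ) * ((z j : ℝ) / r) = (∑ j, (b i j : ℝ) * (z j : ℝ)) / r := by
      rw [Finset.sum_div]
      exact Finset.sum_congr rfl fun j _ => (mul_div_assoc _ _ _).symm
    have hzc : (∑ j, (b i j : ℝ) * (z j : ℝ)) ≤ (r : ℝ) * (c i : ℝ) := by
      exact_mod_cast hz i
    rw [hsum, div_le_iff₀ hr0]
    linarith
  obtain ⟨l, w, hl, hs, hw, hde⟩ := Stmt17Aux.decomp (Stmt17Aux.bvR b) (fun i => (c i : ℝ))
    (Stmt17Aux.vvR v) hnd hexp _ hx0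
  -- a coefficient at least 1/r
  have hjj : ∃ k, 1 ≤ (r : ℝ) * l k := by
    by_contra h
    push_neg at h
    haveI : Nonempty (Fin r) := ⟨⟨0, hr⟩⟩
    have h1 : ∑ k : Fin r, (r : ℝ) * l k < ∑ _k : Fin r, (1 : ℝ) :=
      Finset.sum_lt_sum_of_nonempty Finset.univ_nonempty (fun k _ => h k)
    rw [← Finset.mul_sum, hs, mul_one] at h1
    simp only [Finset.sum_const, Finset.card_univ, Fintype.card_fin, nsmul_eq_mul, mul_one] at h1
    exact lt_irrefl _ h1
  obtain ⟨k0, hk0⟩ := hjj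
  refine ⟨k0, fun i => ?_⟩
  -- vertex feasibility
  have hA : ∀ k, (∑ j', (b i j' : ℝ) * (v k j' : ℝ)) ≤ (c i : ℝ) := fun k =>
    ((hvert (fun j => (v k j : ℝ))).2 ⟨k, rfl⟩).1 i
  set A : Fin r → ℝ := fun k => ∑ j', (b i j' : ℝ) * (v k j' : ℝ) with hAdef
  set Zb : ℝ := ∑ j', (b i j' : ℝ) * (z j' : ℝ) with hZdef
  set W : ℝ := ⟪Stmt17Aux.bvR b i, w⟫ with hWdef
  -- inner product of the decomposition
  have hxd : Zb / r = (∑ k, l k * A k) + W := by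
    have h1 : ⟪Stmt17Aux.bvR b i, (WithLp.toLp 2 (fun j => (z j : ℝ) / r) : EuclideanSpace ℝ (Fin m))⟫
        = Zb / r := by
      rw [Stmt17Aux.hipb, hZdef, Finset.sum_div]
      exact Finset.sum_congr rfl fun j _ => (mul_div_assoc _ _ _).symm
    rw [← h1, hde, inner_add_right, inner_sum, hWdef]
    congr 1
    refine Finset.sum_congr rfl fun k _ => ?_
    rw [real_inner_smul_right, Stmt17Aux.hipb, hAdef]
    simp [Stmt17Aux.vvR]
  have e1 : Zb = ((∑ k, l k * A k) + W) * r := by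
    field_simp at hxd
    linarith [hxd]
  have e2 : ∑ k, ((r : ℝ) * l k) * A k = (∑ k, l k * A k) * r := by
    rw [Finset.sum_mul]
    exact Finset.sum_congr rfl fun k _ => by ring
  have e3 : ∑ k, ((r : ℝ) * l k) * A k - A k0 ≤ (r : ℝ) * (c i : ℝ) - (c i : ℝ) := by
    have h4 : ∑ k, (((r : ℝ) * l k - if k = k0 then 1 else 0) * A k)
        ≤ ∑ k, (((r : ℝ) * l k - if k = k0 then 1 else 0) * (c i : ℝ)) := by
      refine Finset.sum_le_sum fun k _ => mul_le_mul_of_nonneg_left (hA k) ?_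
      by_cases hk : k = k0
      · subst hk; rw [if_pos rfl]; linarith
      · simp only [if_neg hk, sub_zero]
        have := hl k
        positivity
    have h5 : ∑ k, (((r : ℝ) * l k - if k = k0 then 1 else 0) * A k)
        = ∑ k, ((r : ℝ) * l k) * A k - A k0 := by
      simp only [sub_mul]
      rw [Finset.sum_sub_distrib]
      congr 1
      simp [Finset.sum_ite_eq']
    have h6 : ∑ k, (((r : ℝ) * l k - if k = k0 then 1 else 0) * (c i : ℝ))
        = (r : ℝ) * (c i : ℝ) - (c i : ℝ) := by
      simp only [sub_mul]
      rw [Finset.sum_sub_distrib]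
      have hl1 : ∑ k, ((r : ℝ) * l k) * (c i : ℝ) = (r : ℝ) * (c i : ℝ) := by
        rw [← Finset.sum_mul, ← Finset.mul_sum, hs, mul_one]
      have hl2 : ∑ k, (if k = k0 then (1:ℝ) else 0) * (c i : ℝ) = (c i : ℝ) := by
        simp [Finset.sum_ite_eq']
      rw [hl1, hl2]
    rw [h5] at h4
    rw [h6] at h4
    exact h4
  have hWr : W * r ≤ 0 := mul_nonpos_of_nonpos_of_nonneg (hw i) hr0.le
  have e1' : Zb = (∑ k, ((r : ℝ) * l k) * A k) + W * r := by
    rw [e1, add_mul, e2]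
  have hfin : (c i : ℝ) - A k0 ≤ (r : ℝ) * (c i : ℝ) - Zb := by linarith
  simp only [hAdef, hZdef] at hfin
  exact_mod_cast hfin
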